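/- Let s be a positive integer with s congruent to 2 modulo 4 whose square-free part contains no odd prime factor congruent to 2 modulo 3. Then C_3(s) = 3; that is, there exist three vectors in Z^3, each with squared Euclidean norm s, summing to the zero vector. -/

import Mathlib

/-- `-3` is a square mod `p` when `p ≡ 1 [MOD 3]`. -/
lemma exists_sqrt_neg_three (p : ℕ) (hp : p.Prime) (h3 : p % 3 = 1) :
    ∃ r : ZMod p, r ^ 2 = -3 := by
  haveI : Fact p.Prime := ⟨hp⟩
  have hdvd : 3 ∣ Fintype.card (ZMod p)ˣ := by
    rw [ZMod.card_units_eq_totient, Nat.totient_prime hp]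
    omega
  obtain ⟨g, hg⟩ := exists_prime_orderOf_dvd_card 3 hdvd
  set z : ZMod p := (g : ZMod p) with hz
  have hz3 : z ^ 3 = 1 := by
    have : g ^ 3 = 1 := by rw [← hg]; exact pow_orderOf_eq_one g
    rw [hz, ← Units.val_pow_eq_pow_val, this, Units.val_one]
  have hzne : z ≠ 1 := by
    intro h
    have : g = 1 := Units.ext h
    rw [this, orderOf_one] at hg
    omega
  have hquad : z ^ 2 + z + 1 = 0 := by
    have hfac : (z - 1) * (z ^ 2 + z + 1) = 0 := by
      have : z ^ 3 - 1 = 0 := by rw [hz3]; ring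
      linear_combination this
    rcases mul_eq_zero.mp hfac with h | h
    · exact absurd (by linear_combination h) hzne
    · exact h
  exact ⟨2 * z + 1, by linear_combination 4 * hquad⟩

/-- Thue-style lemma: a prime `p ≡ 1 [MOD 3]` is of the form `x² + 3y²`. -/
lemma prime_eq_sq_add_three_sq (p : ℕ) (hp : p.Prime) (h3 : p % 3 = 1) :
    ∃ x y : ℤ, x ^ 2 + 3 * y ^ 2 = p := by
  haveI : Fact p.Prime := ⟨hp⟩
  obtain ⟨r, hr⟩ := exists_sqrt_neg_three p hp h3
  set k := Nat.sqrt p with hk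
  have hklt : k * k < p := by
    have hsq : k * k ≤ p := by have := Nat.sqrt_le' p; rwa [pow_two] at this
    rcases lt_or_eq_of_le hsq with h | h
    · exact h
    · exfalso
      rcases (hp.eq_one_or_self_of_dvd k ⟨k, h.symm⟩) with h1 | h1
      · rw [h1] at h; have := hp.two_le; omega
      · rw [h1] at h; nlinarith [hp.two_le]
  have hcard : Fintype.card (ZMod p) < Fintype.card (Fin (k + 1) × Fin (k + 1)) := by
    simp only [ZMod.card, Fintype.card_prod, Fintype.card_fin]
    have h := Nat.lt_succ_sqrt' p
    simp only [Nat.succ_eq_add_one, pow_two] at h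
    exact h
  obtain ⟨u, v, huv, hf⟩ := Fintype.exists_ne_map_eq_of_card_lt
    (fun ab : Fin (k + 1) × Fin (k + 1) => ((ab.1 : ℕ) : ZMod p) + r * ((ab.2 : ℕ) : ZMod p))
    hcard
  obtain ⟨x, hxdef⟩ : ∃ x : ℤ, x = ((u.1 : ℕ) : ℤ) - ((v.1 : ℕ) : ℤ) := ⟨_, rfl⟩
  obtain ⟨y, hydef⟩ : ∃ y : ℤ, y = ((v.2 : ℕ) : ℤ) - ((u.2 : ℕ) : ℤ) := ⟨_, rfl⟩
  have hxy : (x : ZMod p) = r * (y : ZMod p) := by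
    have := hf
    push_cast [hxdef, hydef]
    linear_combination this
  have hne : ¬(x = 0 ∧ y = 0) := by
    rintro ⟨hx0, hy0⟩
    apply huv
    have h1 : (u.1 : ℕ) = (v.1 : ℕ) := by omega
    have h2 : (u.2 : ℕ) = (v.2 : ℕ) := by omega
    exact Prod.ext (Fin.ext h1) (Fin.ext h2)
  have hxb : x ^ 2 ≤ (k : ℤ) * k := by
    have h1 : (u.1 : ℕ) ≤ k := Nat.lt_succ_iff.mp u.1.isLt
    have h2 : (v.1 : ℕ) ≤ k := Nat.lt_succ_iff.mp v.1.isLt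
    have : -(k : ℤ) ≤ x ∧ x ≤ k := by constructor <;> · rw [hxdef]; push_cast; omega
    nlinarith [this.1, this.2]
  have hyb : y ^ 2 ≤ (k : ℤ) * k := by
    have h1 : (u.2 : ℕ) ≤ k := Nat.lt_succ_iff.mp u.2.isLt
    have h2 : (v.2 : ℕ) ≤ k := Nat.lt_succ_iff.mp v.2.isLt
    have : -(k : ℤ) ≤ y ∧ y ≤ k := by constructor <;> · rw [hydef]; push_cast; omega
    nlinarith [this.1, this.2]
  have hkp : (k : ℤ) * k < p := by exact_mod_cast hklt
  obtain ⟨N, hN⟩ : ∃ N : ℤ, N = x ^ 2 + 3 * y ^ 2 := ⟨_, rfl⟩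
  have hN0 : 0 < N := by
    rw [hN]
    rcases not_and_or.mp hne with h | h
    · have : 0 < x ^ 2 := by positivity
      nlinarith [sq_nonneg y]
    · have : 0 < y ^ 2 := by positivity
      nlinarith [sq_nonneg x]
  have hN4 : N < 4 * p := by rw [hN]; nlinarith
  have hdvd : (p : ℤ) ∣ N := by
    have : ((N : ℤ) : ZMod p) = 0 := by
      rw [hN]
      push_cast
      rw [hxy]
      linear_combination ((y : ZMod p)) ^ 2 * hr
    exact_mod_cast (ZMod.intCast_zmod_eq_zero_iff_dvd N p).mp this
  obtain ⟨d, hd⟩ := hdvd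
  clear hf hxy hne hcard hr hxb hyb
  clear hxdef hydef
  clear huv u v r
  have hp0 : (0 : ℤ) < p := by exact_mod_cast hp.pos
  have hd13 : d = 1 ∨ d = 2 ∨ d = 3 := by
    have h1 : 0 < d := by nlinarith
    have h2 : d < 4 := by nlinarith
    omega
  have hpodd : p % 2 = 1 := by
    rcases hp.eq_two_or_odd with h | h
    · omega
    · exact h
  rcases hd13 with rfl | rfl | rfl
  · exact ⟨x, y, by rw [← hN, hd]; ring⟩

  · exfalso
    have heq : x ^ 2 + 3 * y ^ 2 = 2 * (p : ℤ) := by rw [← hN, hd]; ring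
    have hp2 : (p : ℤ) % 2 = 1 := by omega
    obtain ⟨a, ha | ha⟩ := Int.even_or_odd' x <;>
      obtain ⟨b, hb | hb⟩ := Int.even_or_odd' y <;>
        rw [ha, hb] at heq
    · have h2 : 4 * (a ^ 2) + 12 * (b ^ 2) = 2 * (p : ℤ) := by linear_combination heq
      generalize a ^ 2 = A at h2
      generalize b ^ 2 = B at h2
      omega
    · have h2 : 4 * (a ^ 2) + 12 * (b ^ 2) + 12 * b + 3 = 2 * (p : ℤ) := by
        linear_combination heq
      generalize a ^ 2 = A at h2
      generalize b ^ 2 = B at h2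
      omega
    · have h2 : 4 * (a ^ 2) + 4 * a + 1 + 12 * (b ^ 2) = 2 * (p : ℤ) := by
        linear_combination heq
      generalize a ^ 2 = A at h2
      generalize b ^ 2 = B at h2
      omega
    · have h2 : 4 * (a ^ 2) + 4 * a + 12 * (b ^ 2) + 12 * b + 4 = 2 * (p : ℤ) := by
        linear_combination heq
      generalize a ^ 2 = A at h2
      generalize b ^ 2 = B at h2
      omega
  · have heq : x ^ 2 + 3 * y ^ 2 = 3 * (p : ℤ) := by rw [← hN, hd]; ring
    have h3x : (3 : ℤ) ∣ x ^ 2 := ⟨(p : ℤ) - y ^ 2, by linarith⟩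
    obtain ⟨z, hz⟩ := Int.prime_three.dvd_of_dvd_pow h3x
    have h9 : (3 : ℤ) * (y ^ 2 + 3 * z ^ 2) = 3 * (p : ℤ) := by
      rw [hz] at heq; linear_combination heq
    exact ⟨y, z, mul_left_cancel₀ (by norm_num) h9⟩

/-- A prime `p ≡ 1 [MOD 3]` is Loeschian. -/
lemma prime_loeschian (p : ℕ) (hp : p.Prime) (h3 : p % 3 = 1) :
    ∃ a b : ℤ, a ^ 2 + a * b + b ^ 2 = p := by
  obtain ⟨x, y, h⟩ := prime_eq_sq_add_three_sq p hp h3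
  exact ⟨x + y, -2 * y, by linear_combination h⟩

/-- The Loeschian form is multiplicative. -/
lemma loeschian_mul {a b c d : ℤ} {m n : ℤ} (h1 : a ^ 2 + a * b + b ^ 2 = m)
    (h2 : c ^ 2 + c * d + d ^ 2 = n) :
    (a * c - b * d) ^ 2 + (a * c - b * d) * (a * d + b * c + b * d)
      + (a * d + b * c + b * d) ^ 2 = m * n := by
  rw [← h1, ← h2]; ring

lemma loeschian_of_factorization :
    ∀ m : ℕ, 0 < m → m % 2 = 1 →
      (∀ p : ℕ, p.Prime → p % 3 = 2 → Even (m.factorization p)) →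
      ∃ a b : ℤ, a ^ 2 + a * b + b ^ 2 = m := by
  intro m
  induction m using Nat.strong_induction_on with
  | _ m ih =>
    intro hm hodd h
    rcases eq_or_ne m 1 with rfl | hne
    · exact ⟨1, 0, by norm_num⟩
    · obtain ⟨p, hpdef⟩ : ∃ p, p = m.minFac := ⟨_, rfl⟩
      have hp : p.Prime := hpdef ▸ Nat.minFac_prime hne
      have hpd : p ∣ m := hpdef ▸ Nat.minFac_dvd m
      have hp2 : p ≠ 2 := by
        rintro rfl
        obtain ⟨c, hc⟩ := hpd
        omega
      have hple := hp.two_le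
      rcases Nat.lt_or_ge (p % 3) 2 with hlt | hge
      · -- p % 3 = 0 or 1 : p itself is Loeschian
        have hLp : ∃ a b : ℤ, a ^ 2 + a * b + b ^ 2 = p := by
          rcases Nat.lt_or_ge (p % 3) 1 with h0 | h1
          · -- p % 3 = 0, so p = 3
            have h30 : (3 : ℕ) ∣ p := by omega
            have : p = 3 := ((Nat.prime_dvd_prime_iff_eq Nat.prime_three hp).mp h30).symm
            exact ⟨1, 1, by rw [this]; norm_num⟩
          · exact prime_loeschian p hp (by omega)
        obtain ⟨m', hm'⟩ := hpd
        have hm'pos : 0 < m' := Nat.pos_of_ne_zero (by rintro rfl; simp at hm'; omega)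
        have hm'lt : m' < m := by
          have h4 : 2 * m' ≤ p * m' := Nat.mul_le_mul_right m' hple
          omega
        have hm'odd : m' % 2 = 1 := by
          have hOdd : Odd (p * m') := hm' ▸ Nat.odd_iff.mpr hodd
          exact Nat.odd_iff.mp (Nat.odd_mul.mp hOdd).2
        have hm'fac : ∀ q : ℕ, q.Prime → q % 3 = 2 → Even (m'.factorization q) := by
          intro q hq hq3
          have hqp : q ≠ p := by omega
          have := h q hq hq3
          rw [hm', Nat.factorization_mul (by omega) (by omega)] at this
          simp only [Finsupp.coe_add, Pi.add_apply] at this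
          rwa [hp.factorization, Finsupp.single_eq_of_ne' (Ne.symm hqp), zero_add] at this
        obtain ⟨c, d, hcd⟩ := ih m' hm'lt hm'pos hm'odd hm'fac
        obtain ⟨a, b, hab⟩ := hLp
        refine ⟨a * c - b * d, a * d + b * c + b * d, ?_⟩
        rw [hm']
        push_cast
        exact loeschian_mul hab hcd
      · -- p % 3 = 2 : p² divides m
        have hp3 : p % 3 = 2 := by
          have := Nat.mod_lt p (show 0 < 3 by norm_num)
          omega
        have heven := h p hp hp3
        have h1 : 1 ≤ m.factorization p :=
          (Nat.Prime.pow_dvd_iff_le_factorization hp (by omega)).mp (by simpa using hpd)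
        have h2 : 2 ≤ m.factorization p := by
          obtain ⟨t, ht⟩ := heven; omega
        have hdvd : p ^ 2 ∣ m := (Nat.Prime.pow_dvd_iff_le_factorization hp (by omega)).mpr h2
        obtain ⟨m', hm'⟩ := hdvd
        have hm'pos : 0 < m' := Nat.pos_of_ne_zero (by rintro rfl; simp at hm'; omega)
        have hm'lt : m' < m := by
          have h4 : 2 ^ 2 * m' ≤ p ^ 2 * m' :=
            Nat.mul_le_mul_right m' (Nat.pow_le_pow_left hple 2)
          omega
        have hm'odd : m' % 2 = 1 := by
          have hOdd : Odd (p ^ 2 * m') := hm' ▸ Nat.odd_iff.mpr hodd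
          exact Nat.odd_iff.mp (Nat.odd_mul.mp hOdd).2
        have hm'fac : ∀ q : ℕ, q.Prime → q % 3 = 2 → Even (m'.factorization q) := by
          intro q hq hq3
          have := h q hq hq3
          rw [hm', Nat.factorization_mul (by positivity) (by omega)] at this
          simp only [Finsupp.coe_add, Pi.add_apply] at this
          rw [hp.factorization_pow] at this
          rcases eq_or_ne q p with rfl | hqp
          · rw [Finsupp.single_eq_same] at this
            obtain ⟨t, ht⟩ := this
            exact ⟨t - 1, by omega⟩
          · rwa [Finsupp.single_eq_of_ne' (Ne.symm hqp), zero_add] at this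
        obtain ⟨c, d, hcd⟩ := ih m' hm'lt hm'pos hm'odd hm'fac
        refine ⟨(p : ℤ) * c - 0 * d, (p : ℤ) * d + 0 * c + 0 * d, ?_⟩
        rw [hm']
        push_cast
        exact loeschian_mul (a := (p : ℤ)) (b := 0) (by ring) hcd

theorem C3_eq_three_of_mem_S (s : ℕ) (hs : 0 < s) (hmod : s % 4 = 2)
    (hS : ∀ p : ℕ, p.Prime → p ≠ 2 → p % 3 = 2 → Even (s.factorization p)) :
    ∃ v : Fin 3 → (Fin 3 → ℤ),
      (∀ i, ∑ j, (v i j) ^ 2 = (s : ℤ)) ∧ (∑ i, v i) = 0 := by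
  obtain ⟨m, hm⟩ : ∃ m, s = 2 * m := ⟨s / 2, by omega⟩
  have hmpos : 0 < m := by omega
  have hmodd : m % 2 = 1 := by omega
  have hfac : ∀ p : ℕ, p.Prime → p % 3 = 2 → Even (m.factorization p) := by
    intro p hp hp3
    rcases eq_or_ne p 2 with rfl | hp2
    · rw [Nat.factorization_eq_zero_of_not_dvd (by omega)]
      exact Even.zero
    · have := hS p hp hp2 hp3
      rw [hm, Nat.factorization_mul (by omega) (by omega)] at this
      simp only [Finsupp.coe_add, Pi.add_apply] at this
      rwa [Nat.Prime.factorization Nat.prime_two,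
        Finsupp.single_eq_of_ne' (Ne.symm hp2), zero_add] at this
  obtain ⟨a, b, hab⟩ := loeschian_of_factorization m hmpos hmodd hfac
  refine ⟨![![a, b, -(a + b)], ![b, -(a + b), a], ![-(a + b), a, b]], ?_, ?_⟩
  · have hs2 : (s : ℤ) = 2 * m := by exact_mod_cast congrArg (Nat.cast : ℕ → ℤ) hm
    intro i
    fin_cases i <;>
      simp [Fin.sum_univ_three] <;>
      rw [hs2] <;> linear_combination 2 * hab
  · funext j
    fin_cases j <;> simp [Fin.sum_univ_three] <;> ring
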